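/- Let R be a ring and M a nonzero virtually semisimple left R-module. Then M is finitely generated if and only if M has finite uniform dimension, i.e., there exist finitely many uniform submodules U₁, …, Uₙ of M that are independent (their sum is an internal direct sum) and whose sum U₁ ⊕ ⋯ ⊕ Uₙ is an essential submodule of M. -/

import Mathlib

universe u v w

/-- A left `R`-module `M` is *virtually semisimple* if every submodule of `M` is
isomorphic, as an `R`-module, to a direct summand of `M`. -/
def IsVirtuallySemisimple (R : Type u) [Ring R] (M : Type v) [AddCommGroup M] [Module R M] :
    Prop :=
  ∀ N : Submodule R M, ∃ K : Submodule R M, (∃ K' : Submodule R M, IsCompl K K') ∧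
    Nonempty (N ≃ₗ[R] K)

/-- A module is *completely virtually semisimple* if every submodule is virtually semisimple. -/
def IsCompletelyVirtuallySemisimple (R : Type u) [Ring R] (M : Type v) [AddCommGroup M]
    [Module R M] : Prop :=
  ∀ N : Submodule R M, IsVirtuallySemisimple R N


/-- A submodule `U` of `M` is *uniform* if `U ≠ 0` and any two nonzero submodules of `U` have
nonzero intersection. -/
def IsUniformSubmodule {R : Type u} [Ring R] {M : Type v} [AddCommGroup M] [Module R M]
    (U : Submodule R M) : Prop :=
  U ≠ ⊥ ∧ ∀ A B : Submodule R M, A ≤ U → B ≤ U → A ≠ ⊥ → B ≠ ⊥ → A ⊓ B ≠ ⊥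

/-- A submodule `N` of `M` is *essential* if it meets every nonzero submodule nontrivially. -/
def IsEssentialSubmodule {R : Type u} [Ring R] {M : Type v} [AddCommGroup M] [Module R M]
    (N : Submodule R M) : Prop :=
  ∀ K : Submodule R M, K ≠ ⊥ → N ⊓ K ≠ ⊥

section Helpers

variable {R : Type u} [Ring R] {M : Type v} [AddCommGroup M] [Module R M]

/-- `A` is an essential submodule of `B` (elementwise form). -/
def EssIn (A B : Submodule R M) : Prop :=
  A ≤ B ∧ ∀ x ∈ B, x ≠ 0 → ∃ r : R, r • x ∈ A ∧ r • x ≠ 0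

theorem essIn_trans {A B C : Submodule R M} (h1 : EssIn A B) (h2 : EssIn B C) : EssIn A C := by
  refine ⟨h1.1.trans h2.1, fun x hx hx0 => ?_⟩
  obtain ⟨r, hrB, hr0⟩ := h2.2 x hx hx0
  obtain ⟨s, hsA, hs0⟩ := h1.2 _ hrB hr0
  exact ⟨s * r, by rwa [mul_smul], by rwa [mul_smul]⟩

theorem essIn_mono {A A' B : Submodule R M} (h : EssIn A B) (hA : A ≤ A') (hA' : A' ≤ B) :
    EssIn A' B := by
  refine ⟨hA', fun x hx hx0 => ?_⟩
  obtain ⟨r, h1, h2⟩ := h.2 x hx hx0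
  exact ⟨r, hA h1, h2⟩

theorem isEssentialSubmodule_iff {N : Submodule R M} :
    IsEssentialSubmodule N ↔ EssIn N ⊤ := by
  constructor
  · intro h
    refine ⟨le_top, fun x _ hx0 => ?_⟩
    have hsp : Submodule.span R {x} ≠ ⊥ := by
      simp [Submodule.span_singleton_eq_bot, hx0]
    have := h _ hsp
    rw [Submodule.ne_bot_iff] at this
    obtain ⟨y, hy, hy0⟩ := this
    obtain ⟨r, rfl⟩ := Submodule.mem_span_singleton.1 hy.2
    exact ⟨r, hy.1, hy0⟩
  · intro h K hK
    rw [Submodule.ne_bot_iff] at hK ⊢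
    obtain ⟨x, hx, hx0⟩ := hK
    obtain ⟨r, h1, h2⟩ := h.2 x trivial hx0
    exact ⟨r • x, ⟨h1, K.smul_mem r hx⟩, h2⟩

theorem uniform_essIn {U C : Submodule R M} (hU : IsUniformSubmodule U) (hC : C ≤ U)
    (hC0 : C ≠ ⊥) : EssIn C U := by
  refine ⟨hC, fun x hx hx0 => ?_⟩
  have hsp : Submodule.span R {x} ≠ ⊥ := by
    simp [Submodule.span_singleton_eq_bot, hx0]
  have hsple : Submodule.span R {x} ≤ U := (Submodule.span_singleton_le_iff_mem x U).2 hx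
  have := hU.2 _ _ hsple hC hsp hC0
  rw [Submodule.ne_bot_iff] at this
  obtain ⟨y, ⟨hy1, hy2⟩, hy0⟩ := this
  obtain ⟨r, rfl⟩ := Submodule.mem_span_singleton.1 hy1
  exact ⟨r, hy2, hy0⟩

/-- binary essential sum -/
theorem essIn_sup {A B A' B' : Submodule R M} (h : EssIn A B) (h' : EssIn A' B')
    (hd : Disjoint B B') : EssIn (A ⊔ A') (B ⊔ B') := by
  refine ⟨sup_le_sup h.1 h'.1, fun x hx hx0 => ?_⟩
  obtain ⟨b, hb, b', hb', rfl⟩ := Submodule.mem_sup.1 hx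
  by_cases hbz : b = 0
  · subst hbz
    rw [zero_add] at hx0 ⊢
    obtain ⟨r, h1, h2⟩ := h'.2 b' hb' hx0
    exact ⟨r, Submodule.mem_sup_right h1, h2⟩
  · obtain ⟨r, h1, h2⟩ := h.2 b hb hbz
    by_cases hrb' : r • b' = 0
    · refine ⟨r, ?_, ?_⟩
      · rw [smul_add, hrb', add_zero]; exact Submodule.mem_sup_left h1
      · rw [smul_add, hrb', add_zero]; exact h2
    · obtain ⟨s, h3, h4⟩ := h'.2 (r • b') (B'.smul_mem r hb') hrb'
      refine ⟨s * r, ?_, ?_⟩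
      · rw [mul_smul, smul_add, smul_add]
        exact Submodule.add_mem _ (Submodule.mem_sup_left (A.smul_mem s h1))
          (Submodule.mem_sup_right h3)
      · rw [mul_smul, smul_add, smul_add]
        intro hz
        have hmem : s • r • b' ∈ B ⊓ B' := by
          refine ⟨?_, B'.smul_mem _ (B'.smul_mem _ hb')⟩
          rw [← neg_eq_of_add_eq_zero_right hz]
          exact B.neg_mem (B.smul_mem _ (h.1 h1))
        rw [hd.eq_bot, Submodule.mem_bot] at hmem
        exact h4 hmem

theorem iSup_fin_succ {n : ℕ} (f : Fin (n + 1) → Submodule R M) :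
    (⨆ i, f i) = f 0 ⊔ ⨆ i : Fin n, f i.succ := by
  refine le_antisymm (iSup_le ?_) (sup_le (le_iSup f 0) (iSup_le fun i => le_iSup f i.succ))
  refine Fin.cases le_sup_left fun i => ?_
  exact le_trans (le_iSup (fun j : Fin n => f j.succ) i) le_sup_right

theorem indep_tail {n : ℕ} {T : Fin (n + 1) → Submodule R M} (h : iSupIndep T) :
    iSupIndep fun i : Fin n => T i.succ := by
  intro i
  refine Disjoint.mono_right ?_ (h i.succ)
  refine iSup_le fun j => iSup_le fun hj => ?_
  exact le_iSup₂ (f := fun k _ => T k) j.succ (fun hc => hj (Fin.succ_injective n hc))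

theorem essIn_iSup : ∀ {n : ℕ} (A T : Fin n → Submodule R M), iSupIndep T →
    (∀ i, EssIn (A i) (T i)) → EssIn (⨆ i, A i) (⨆ i, T i) := by
  intro n
  induction n with
  | zero =>
    intro A T _ _
    rw [iSup_of_empty, iSup_of_empty]
    exact ⟨le_rfl, fun x hx hx0 => absurd ((Submodule.mem_bot R).1 hx) hx0⟩
  | succ n ih =>
    intro A T hT hAT
    rw [iSup_fin_succ A, iSup_fin_succ T]
    refine essIn_sup (hAT 0) (ih _ _ (indep_tail hT) fun i => hAT i.succ) ?_
    refine Disjoint.mono_right ?_ (hT 0)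
    exact iSup_le fun i => le_iSup₂ (f := fun k _ => T k) i.succ (Fin.succ_ne_zero i)

end Helpers

section Helpers2

variable {R : Type u} [Ring R] {M : Type v} [AddCommGroup M] [Module R M]

theorem indep_update {ι : Type w} [DecidableEq ι] {T : ι → Submodule R M} (hT : iSupIndep T)
    (j₀ : ι) (B : Submodule R M) (hB : Disjoint B (⨆ (l) (_ : l ≠ j₀), T l)) :
    iSupIndep (Function.update T j₀ B) := by
  intro j
  rcases eq_or_ne j j₀ with rfl | hj
  · rw [Function.update_self]
    refine Disjoint.mono_right ?_ hB
    refine iSup_le fun l => iSup_le fun hl => ?_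
    rw [Function.update_of_ne hl]
    exact le_iSup₂ (f := fun k _ => T k) l hl
  · rw [Function.update_of_ne hj]
    have hle : (⨆ (l) (_ : l ≠ j), Function.update T j₀ B l) ≤
        B ⊔ ⨆ (l) (_ : l ≠ j ∧ l ≠ j₀), T l := by
      refine iSup_le fun l => iSup_le fun hl => ?_
      rcases eq_or_ne l j₀ with rfl | hlj₀
      · rw [Function.update_self]; exact le_sup_left
      · rw [Function.update_of_ne hlj₀]
        exact le_trans (le_iSup₂ (f := fun k (_ : k ≠ j ∧ k ≠ j₀) => T k) l ⟨hl, hlj₀⟩)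
          le_sup_right
    refine Disjoint.mono_right hle ?_
    rw [Submodule.disjoint_def]
    intro x hxj hx
    obtain ⟨b, hb, y, hy, rfl⟩ := Submodule.mem_sup.1 hx
    have hyle : y ∈ ⨆ (l) (_ : l ≠ j₀), T l := by
      refine (iSup_le fun l => iSup_le fun hl => ?_ : (⨆ (l) (_ : l ≠ j ∧ l ≠ j₀), T l) ≤ _) hy
      exact le_iSup₂ (f := fun k (_ : k ≠ j₀) => T k) l hl.2
    have hbB : b = 0 := by
      have hbmem : b ∈ ⨆ (l) (_ : l ≠ j₀), T l := by
        have hxmem : b + y ∈ ⨆ (l) (_ : l ≠ j₀), T l :=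
          (le_iSup₂ (f := fun k (_ : k ≠ j₀) => T k) j hj) hxj
        have := Submodule.sub_mem _ hxmem hyle
        simpa using this
      exact Submodule.disjoint_def.1 hB b hb hbmem
    subst hbB
    rw [zero_add] at hxj ⊢
    have hyj : y ∈ ⨆ (l) (_ : l ≠ j), T l := by
      refine (iSup_le fun l => iSup_le fun hl => ?_ : (⨆ (l) (_ : l ≠ j ∧ l ≠ j₀), T l) ≤ _) hy
      exact le_iSup₂ (f := fun k (_ : k ≠ j) => T k) l hl.1
    exact Submodule.disjoint_def.1 (hT j) y hxj hyj

theorem indep_cons {n : ℕ} {V : Fin n → Submodule R M} (hV : iSupIndep V)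
    (B : Submodule R M) (hB : Disjoint B (⨆ i, V i)) : iSupIndep (Fin.cons B V) := by
  have hbot : iSupIndep (Fin.cons ⊥ V : Fin (n + 1) → Submodule R M) := by
    intro j
    refine Fin.cases ?_ ?_ j
    · simp
    · intro i
      have : (Fin.cons ⊥ V : Fin (n + 1) → Submodule R M) i.succ = V i := Fin.cons_succ _ _ _
      rw [this]
      refine Disjoint.mono_right ?_ (hV i)
      refine iSup_le fun k => iSup_le fun hk => ?_
      refine Fin.cases ?_ ?_ k hk
      · intro _; simp
      · intro l hl
        rw [Fin.cons_succ]
        exact le_iSup₂ (f := fun m (_ : m ≠ i) => V m) l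
          (fun hc => hl (by rw [hc]))
  have := indep_update hbot 0 B ?_
  · rwa [Fin.update_cons_zero] at this
  · refine Disjoint.mono_right ?_ hB
    refine iSup_le fun k => iSup_le fun hk => ?_
    refine Fin.cases ?_ ?_ k hk
    · intro h; exact absurd rfl h
    · intro l _
      rw [Fin.cons_succ]
      exact le_iSup V l

end Helpers2

section LemA

variable {R : Type u} [Ring R] {M : Type v} [AddCommGroup M] [Module R M]

theorem lemA_aux {n : ℕ} (U : Fin n → Submodule R M) (hU : ∀ i, IsUniformSubmodule (U i))
    (hUind : iSupIndep U) (hUess : EssIn (⨆ i, U i) ⊤) :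
    ∀ (m : ℕ) (s : Finset (Fin (n + 1))) (τ : Fin (n + 1) → Fin n)
      (T : Fin (n + 1) → Submodule R M), s.card + m = n + 1 → (∀ j, T j ≠ ⊥) →
      iSupIndep T → (∀ j ∈ s, T j = U (τ j)) → Set.InjOn τ ↑s → False := by
  intro m
  induction m with
  | zero =>
    intro s τ T hcard hT hTind hTs hinj
    rw [Nat.add_zero] at hcard
    have hs : s = Finset.univ := Finset.eq_univ_of_card s (by simpa using hcard)
    subst hs
    have hinj' : Function.Injective τ := by
      rw [← Set.injOn_univ]
      simpa using hinj
    have := Fintype.card_le_of_injective τ hinj'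
    rw [Fintype.card_fin, Fintype.card_fin] at this
    omega
  | succ m ih =>
    intro s τ T hcard hT hTind hTs hinj
    -- find j₀ ∉ s
    have hsne : s ≠ Finset.univ := by
      intro hs
      subst hs
      rw [Finset.card_univ, Fintype.card_fin] at hcard
      omega
    obtain ⟨j₀, hj₀⟩ : ∃ j₀, j₀ ∉ s := by
      by_contra hc
      push_neg at hc
      exact hsne (Finset.eq_univ_iff_forall.2 hc)
    set W : Submodule R M := ⨆ (l) (_ : l ≠ j₀), T l with hW
    have hdisj : Disjoint (T j₀) W := hTind j₀
    -- find i with U i ⊓ W = ⊥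
    obtain ⟨i, hi⟩ : ∃ i, Disjoint (U i) W := by
      by_contra hc
      push_neg at hc
      have hWess : EssIn W ⊤ := by
        have h1 : ∀ i, EssIn (U i ⊓ W) (U i) := by
          intro i
          refine uniform_essIn (hU i) inf_le_left ?_
          intro hb
          exact hc i (Submodule.disjoint_def.2 fun x hx hxW => by
            have : x ∈ U i ⊓ W := ⟨hx, hxW⟩
            rw [hb] at this
            simpa using this)
        have h2 : EssIn (⨆ i, U i ⊓ W) (⨆ i, U i) := essIn_iSup _ _ hUind h1
        have h3 : EssIn (⨆ i, U i ⊓ W) ⊤ := essIn_trans h2 hUess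
        exact essIn_mono h3 (iSup_le fun i => inf_le_right) le_top
      obtain ⟨x, hx, hx0⟩ := (Submodule.ne_bot_iff _).1 (hT j₀)
      obtain ⟨r, hrW, hr0⟩ := hWess.2 x trivial hx0
      exact hr0 (Submodule.disjoint_def.1 hdisj _ (Submodule.smul_mem _ r hx) hrW)
    -- i is fresh
    have hfresh : ∀ j ∈ s, τ j ≠ i := by
      intro j hjs hji
      have hjne : j ≠ j₀ := fun h => hj₀ (by rw [← h]; exact hjs)
      have hTjW : T j ≤ W := le_iSup₂ (f := fun k (_ : k ≠ j₀) => T k) j hjne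
      have : U i ≤ W := by rw [← hji, ← hTs j hjs]; exact hTjW
      have hUib : U i = ⊥ := by
        refine (Submodule.eq_bot_iff _).2 fun x hx => ?_
        exact Submodule.disjoint_def.1 hi x hx (this hx)
      exact (hU i).1 hUib
    -- new configuration
    refine ih (insert j₀ s) (Function.update τ j₀ i) (Function.update T j₀ (U i)) ?_ ?_ ?_ ?_ ?_
    · rw [Finset.card_insert_of_notMem hj₀]
      omega
    · intro j
      rcases eq_or_ne j j₀ with rfl | hj
      · rw [Function.update_self]; exact (hU i).1
      · rw [Function.update_of_ne hj]; exact hT j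
    · exact indep_update hTind j₀ (U i) (by rw [← hW]; exact hi)
    · intro j hj
      rcases eq_or_ne j j₀ with rfl | hjne
      · rw [Function.update_self, Function.update_self]
      · rw [Function.update_of_ne hjne, Function.update_of_ne hjne]
        exact hTs j (Finset.mem_of_mem_insert_of_ne hj hjne)
    · intro a ha b hb hab
      simp only [Finset.coe_insert, Set.mem_insert_iff, Finset.mem_coe] at ha hb
      rcases ha with rfl | ha <;> rcases hb with rfl | hb
      · rfl
      · rw [Function.update_self, Function.update_of_ne (fun h => hj₀ (by rw [← h]; exact hb))] at hab
        exact absurd hab.symm (hfresh b hb)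
      · rw [Function.update_self, Function.update_of_ne (fun h => hj₀ (by rw [← h]; exact ha))] at hab
        exact absurd hab (hfresh a ha)
      · rw [Function.update_of_ne (fun h => hj₀ (by rw [← h]; exact ha)),
          Function.update_of_ne (fun h => hj₀ (by rw [← h]; exact hb))] at hab
        exact hinj ha hb hab

theorem lemA {n : ℕ} (U : Fin n → Submodule R M) (hU : ∀ i, IsUniformSubmodule (U i))
    (hUind : iSupIndep U) (hUess : EssIn (⨆ i, U i) ⊤)
    (V : Fin (n + 1) → Submodule R M) (hV : ∀ j, V j ≠ ⊥) (hVind : iSupIndep V) : False := by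
  cases n with
  | zero =>
    have hbot : (⨆ i : Fin 0, U i) = ⊥ := by simp
    rw [hbot] at hUess
    obtain ⟨x, hx, hx0⟩ := (Submodule.ne_bot_iff _).1 (hV 0)
    obtain ⟨r, hr, hr0⟩ := hUess.2 x trivial hx0
    exact hr0 ((Submodule.mem_bot R).1 hr)
  | succ n =>
    exact lemA_aux U hU hUind hUess (n + 2) ∅ (fun _ => 0) V (by simp) hV hVind
      (by simp) (by simp)
end LemA

section Noeth

variable {R : Type u} [Ring R] {M : Type v} [AddCommGroup M] [Module R M]

theorem exists_uniform_le [IsNoetherian R M] (N : Submodule R M) (hN : N ≠ ⊥) :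
    ∃ U : Submodule R M, U ≤ N ∧ IsUniformSubmodule U := by
  by_contra hcon
  push_neg at hcon
  have step : ∀ B : Submodule R M, B ≤ N ∧ B ≠ ⊥ →
      ∃ A C : Submodule R M, (C ≤ N ∧ C ≠ ⊥) ∧ C ≤ B ∧ A ≤ B ∧ A ≠ ⊥ ∧ A ⊓ C = ⊥ := by
    rintro B ⟨hBN, hB0⟩
    have := hcon B hBN
    rw [IsUniformSubmodule] at this
    push_neg at this
    obtain ⟨A, C, hA, hC, hA0, hC0, hAC⟩ := this hB0
    exact ⟨A, C, ⟨hC.trans hBN, hC0⟩, hC, hA, hA0, hAC⟩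
  choose fA fC hfC hfCB hfA1 hfA2 hfAC using step
  let F : {B : Submodule R M // B ≤ N ∧ B ≠ ⊥} → {B : Submodule R M // B ≤ N ∧ B ≠ ⊥} :=
    fun b => ⟨fC b.1 b.2, hfC b.1 b.2⟩
  let seq : ℕ → {B : Submodule R M // B ≤ N ∧ B ≠ ⊥} := fun k => F^[k] ⟨N, le_rfl, hN⟩
  have hseq : ∀ k, (seq (k + 1)).1 = fC (seq k).1 (seq k).2 := by
    intro k
    show (F^[k+1] _).1 = _
    rw [Function.iterate_succ_apply' F k]
  set Nk : ℕ → Submodule R M := fun k => (seq k).1 with hNk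
  set Ak : ℕ → Submodule R M := fun k => fA (seq k).1 (seq k).2 with hAkdef
  have hAkNk : ∀ k, Ak k ≤ Nk k := fun k => hfA1 (seq k).1 (seq k).2
  have hAk0 : ∀ k, Ak k ≠ ⊥ := fun k => hfA2 (seq k).1 (seq k).2
  have hAkNk1 : ∀ k, Ak k ⊓ Nk (k + 1) = ⊥ := by
    intro k
    show Ak k ⊓ (seq (k+1)).1 = ⊥
    rw [hseq k]
    exact hfAC (seq k).1 (seq k).2
  have hNkmono : ∀ k, Nk (k + 1) ≤ Nk k := by
    intro k
    show (seq (k+1)).1 ≤ _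
    rw [hseq k]
    exact hfCB (seq k).1 (seq k).2
  let Ck : ℕ → Submodule R M := fun k => (Finset.range k).sup Ak
  have hCsucc : ∀ k, Ck (k + 1) = Ak k ⊔ Ck k := by
    intro k
    show (Finset.range (k+1)).sup Ak = _
    rw [Finset.range_add_one, Finset.sup_insert]
  have claim1 : ∀ k, ∀ x ∈ Ck k, x ∈ Nk k → x = 0 := by
    intro k
    induction k with
    | zero =>
      intro x hx _
      simpa [Ck] using hx
    | succ k ih =>
      intro x hx hxN
      rw [hCsucc k] at hx
      obtain ⟨a, ha, c, hc, rfl⟩ := Submodule.mem_sup.1 hx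
      have hcN : c ∈ Nk k := by
        have h1 : a + c ∈ Nk k := hNkmono k hxN
        have h2 : a ∈ Nk k := hAkNk k ha
        simpa using Submodule.sub_mem _ h1 h2
      have hc0 : c = 0 := ih c hc hcN
      subst hc0
      rw [add_zero] at hxN ⊢
      have : a ∈ Ak k ⊓ Nk (k + 1) := ⟨ha, hxN⟩
      rw [hAkNk1 k] at this
      simpa using this
  have hCkmono : Monotone Ck := by
    intro a b hab
    exact Finset.sup_mono (by simpa using Finset.range_subset_range.2 hab)
  obtain ⟨n₀, hst⟩ := monotone_stabilizes_iff_noetherian.2 (inferInstance) ⟨Ck, hCkmono⟩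
  have heq : Ck n₀ = Ck (n₀ + 1) := hst (n₀ + 1) (Nat.le_succ n₀)
  have hA : Ak n₀ ≤ Ck (n₀ + 1) := Finset.le_sup (Finset.self_mem_range_succ n₀)
  rw [← heq] at hA
  refine hAk0 n₀ ((Submodule.eq_bot_iff _).2 fun x hx => ?_)
  exact claim1 n₀ x (hA hx) (hAkNk n₀ hx)

theorem exists_uniform_family [IsNoetherian R M] [Nontrivial M] :
    ∃ (n : ℕ) (U : Fin n → Submodule R M), (∀ i, IsUniformSubmodule (U i)) ∧
      iSupIndep U ∧ EssIn (⨆ i, U i) ⊤ := by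
  set 𝒯 : Set (Submodule R M) := {C | ∃ (n : ℕ) (U : Fin n → Submodule R M),
    (∀ i, IsUniformSubmodule (U i)) ∧ iSupIndep U ∧ C = ⨆ i, U i} with h𝒯
  have hne : 𝒯.Nonempty := by
    have htop : (⊤ : Submodule R M) ≠ ⊥ := by
      obtain ⟨x, hx⟩ := exists_ne (0 : M)
      intro h
      have hxb : x ∈ (⊥ : Submodule R M) := h ▸ (Submodule.mem_top : x ∈ (⊤ : Submodule R M))
      exact hx (by simpa using hxb)
    obtain ⟨U₀, _, hU₀⟩ := exists_uniform_le (⊤ : Submodule R M) htop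
    refine ⟨U₀, 1, fun _ => U₀, fun _ => hU₀, ?_, by rw [ciSup_unique]⟩
    intro i
    have : (⨆ (j : Fin 1) (_ : j ≠ i), U₀) = ⊥ := by
      refine le_antisymm (iSup_le fun j => iSup_le fun hj => ?_) bot_le
      exact absurd (Subsingleton.elim j i) hj
    rw [this]
    exact disjoint_bot_right
  obtain ⟨C, hC, hmax⟩ := set_has_maximal_iff_noetherian.2 inferInstance 𝒯 hne
  obtain ⟨n, U, hU, hUind, rfl⟩ := hC
  refine ⟨n, U, hU, hUind, ?_⟩
  rw [← isEssentialSubmodule_iff]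
  intro K hK
  intro hbot
  obtain ⟨U', hU'K, hU'⟩ := exists_uniform_le K hK
  have hdisj : Disjoint U' (⨆ i, U i) := by
    rw [Submodule.disjoint_def]
    intro x hx hx2
    have : x ∈ (⨆ i, U i) ⊓ K := ⟨hx2, hU'K hx⟩
    rw [hbot] at this
    simpa using this
  have hcons : iSupIndep (Fin.cons U' U : Fin (n + 1) → Submodule R M) :=
    indep_cons hUind U' hdisj
  have hmem : (⨆ j, (Fin.cons U' U : Fin (n + 1) → Submodule R M) j) ∈ 𝒯 :=
    ⟨n + 1, Fin.cons U' U, fun j => Fin.cases hU' hU j, hcons, rfl⟩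
  refine hmax _ hmem ?_
  have hsup : (⨆ j, (Fin.cons U' U : Fin (n + 1) → Submodule R M) j) = U' ⊔ ⨆ i, U i := by
    rw [iSup_fin_succ]
    simp [Fin.cons_zero, Fin.cons_succ]
  rw [hsup]
  refine lt_of_le_of_ne le_sup_right fun h => ?_
  have hU'le : U' ≤ ⨆ i, U i := by rw [h]; exact le_sup_left
  have : U' = ⊥ := by
    refine (Submodule.eq_bot_iff _).2 fun x hx => ?_
    exact Submodule.disjoint_def.1 hdisj x hx (hU'le hx)
  exact hU'.1 this

end Noeth


/-- A nonzero virtually semisimple module is finitely generated iff it has finite uniform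
dimension, i.e. there are finitely many independent uniform submodules whose direct sum is
essential in `M`. -/
theorem stmt_7 (R : Type u) [Ring R] (M : Type v) [AddCommGroup M] [Module R M]
    [Nontrivial M] (hM : IsVirtuallySemisimple R M) :
    Module.Finite R M ↔
      ∃ (n : ℕ) (U : Fin n → Submodule R M), (∀ i, IsUniformSubmodule (U i)) ∧
        iSupIndep U ∧ IsEssentialSubmodule (⨆ i, U i) := by
  constructor
  · intro hfin
    haveI := hfin
    haveI hNoeth : IsNoetherian R M := by
      rw [isNoetherian_def]
      intro s
      obtain ⟨K, ⟨K', hc⟩, ⟨e⟩⟩ := hM s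
      haveI h2 : Module.Finite R K :=
        Module.Finite.equiv (Submodule.quotientEquivOfIsCompl K' K hc.symm)
      haveI h3 : Module.Finite R s := Module.Finite.equiv e.symm
      exact Module.Finite.iff_fg.mp h3
    obtain ⟨n, U, hU, hUind, hUess⟩ := exists_uniform_family (R := R) (M := M)
    exact ⟨n, U, hU, hUind, isEssentialSubmodule_iff.2 hUess⟩
  · rintro ⟨n, U, hU, hUind, hUessL⟩
    have hUess : EssIn (⨆ i, U i) ⊤ := isEssentialSubmodule_iff.1 hUessL
    have hex : ∀ i, ∃ x ∈ U i, x ≠ (0 : M) := fun i => (Submodule.ne_bot_iff _).1 (hU i).1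
    choose x hxU hx0 using hex
    set S : Fin n → Submodule R M := fun i => Submodule.span R {x i} with hS
    have hSU : ∀ i, S i ≤ U i := fun i => (Submodule.span_singleton_le_iff_mem _ _).2 (hxU i)
    have hSx : ∀ i, x i ∈ S i := fun i => Submodule.mem_span_singleton_self _
    have hS0 : ∀ i, S i ≠ ⊥ := by
      intro i h
      have := hSx i
      rw [h, Submodule.mem_bot] at this
      exact hx0 i this
    have hSind : iSupIndep S := hUind.mono hSU
    set N : Submodule R M := ⨆ i, S i with hN
    have hSessU : ∀ i, EssIn (S i) (U i) := fun i => uniform_essIn (hU i) (hSU i) (hS0 i)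
    have hNess : EssIn N ⊤ := essIn_trans (essIn_iSup S U hUind hSessU) hUess
    obtain ⟨K, ⟨K', hc⟩, ⟨e⟩⟩ := hM N
    set f : N →ₗ[R] M := K.subtype.comp e.toLinearMap with hf
    have hfinj : Function.Injective f := by
      have : Function.Injective (K.subtype) := Submodule.injective_subtype K
      exact this.comp e.injective
    set S' : Fin n → Submodule R N := fun i => (S i).comap N.subtype with hS'
    set W : Fin n → Submodule R M := fun i => (S' i).map f with hWdef
    have hWK : ∀ i, W i ≤ K := by
      rintro i w hw
      obtain ⟨y, -, rfl⟩ := hw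
      exact (e y).2
    have hSN : ∀ i, S i ≤ N := fun i => le_iSup S i
    have hW0 : ∀ i, W i ≠ ⊥ := by
      intro i h
      have hz : (⟨x i, hSN i (hSx i)⟩ : N) ∈ S' i := by
        simp only [hS', Submodule.mem_comap, Submodule.coe_subtype]
        exact hSx i
      have hmem : f ⟨x i, hSN i (hSx i)⟩ ∈ W i := Submodule.mem_map_of_mem hz
      rw [h, Submodule.mem_bot] at hmem
      have hz0 : (⟨x i, hSN i (hSx i)⟩ : N) = 0 := hfinj (by simpa using hmem)
      exact hx0 i (by simpa using congrArg Subtype.val hz0)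
    have hS'ind : iSupIndep S' := by
      intro i
      rw [Submodule.disjoint_def]
      intro z hz1 hz2
      have hz2' : (z : M) ∈ ⨆ (j) (_ : j ≠ i), S j := by
        have hle : (⨆ (j) (_ : j ≠ i), S' j) ≤
            Submodule.comap N.subtype (⨆ (j) (_ : j ≠ i), S j) := by
          refine iSup_le fun j => iSup_le fun hj => ?_
          exact Submodule.comap_mono (le_iSup₂ (f := fun k (_ : k ≠ i) => S k) j hj)
        exact hle hz2
      have hmem : (z : M) ∈ S i ⊓ ⨆ (j) (_ : j ≠ i), S j := ⟨hz1, hz2'⟩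
      rw [(hSind i).eq_bot, Submodule.mem_bot] at hmem
      exact Subtype.ext hmem
    have hWind : iSupIndep W := by
      intro i
      rw [Submodule.disjoint_def]
      intro w hw1 hw2
      have hmap : (⨆ (j) (_ : j ≠ i), W j) = Submodule.map f (⨆ (j) (_ : j ≠ i), S' j) := by
        rw [Submodule.map_iSup]
        exact iSup_congr fun j => by rw [Submodule.map_iSup]
      rw [hmap] at hw2
      obtain ⟨z, hz, rfl⟩ := hw2
      obtain ⟨z', hz', hz'e⟩ := hw1
      have hzz : z' = z := hfinj hz'e
      subst hzz
      have hmem : z' ∈ S' i ⊓ ⨆ (j) (_ : j ≠ i), S' j := ⟨hz', hz⟩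
      rw [(hS'ind i).eq_bot, Submodule.mem_bot] at hmem
      rw [hmem]
      exact map_zero f
    have hK' : K' = ⊥ := by
      by_contra hK'
      refine lemA U hU hUind hUess (Fin.cons K' W) ?_ ?_
      · intro j
        refine Fin.cases ?_ ?_ j
        · exact hK'
        · intro l
          rw [Fin.cons_succ]
          exact hW0 l
      · refine indep_cons hWind K' ?_
        exact (hc.disjoint.symm).mono_right (iSup_le fun i => hWK i)
    have hKtop : K = ⊤ := by
      have h1 : K ⊔ K' = ⊤ := hc.sup_eq_top
      rwa [hK', sup_bot_eq] at h1
    have eM : N ≃ₗ[R] M := e.trans ((LinearEquiv.ofEq K ⊤ hKtop).trans Submodule.topEquiv)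
    haveI hNF : Module.Finite R N := by
      have hNeq : N = Submodule.span R (Set.range x) := by
        rw [Submodule.span_range_eq_iSup]
      rw [hNeq]
      exact Module.Finite.span_of_finite R (Set.finite_range x)
    exact Module.Finite.equiv eM
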